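/- Least projection above an effect (ceiling): let M be a von Neumann algebra on a complex Hilbert space H and let b ∈ M be an effect. Then there is a least projection p ∈ M with b ≤ p, namely the least upper bound, in the Loewner order on self-adjoint bounded operators on H, of the ascending sequence b^{1/2ⁿ} (n = 0, 1, 2, …, powers via continuous functional calculus). Moreover, every bounded operator a on H that commutes with b commutes with p. -/

import Mathlib

set_option synthInstance.maxHeartbeats 1000000
set_option maxHeartbeats 4000000

open scoped NNReal InnerProductSpace
open Filter Topology ContinuousLinearMap

section CStarAux
variable {A : Type*} [CStarAlgebra A] [PartialOrder A] [StarOrderedRing A]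

lemma aux_sqrt_le_one {a : A} (h0 : 0 ≤ a) (h1 : a ≤ 1) : CFC.sqrt a ≤ 1 := by
  rw [CFC.sqrt_eq_cfc, cfc_nnreal_eq_real _ _ h0]
  calc cfc (fun x : ℝ => (NNReal.sqrt x.toNNReal : ℝ)) a
      ≤ cfc (fun _ : ℝ => (1:ℝ)) a := by
        refine cfc_mono (hf := (NNReal.continuous_coe.comp (NNReal.continuous_sqrt.comp continuous_real_toNNReal)).continuousOn) ?_
        intro x hx
        have hx1 : x ≤ 1 := by
          rw [CFC.le_one_iff (R := ℝ) a] at h1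
          exact h1 x hx
        have : x.toNNReal ≤ 1 := Real.toNNReal_le_one.mpr hx1
        calc (NNReal.sqrt x.toNNReal : ℝ) ≤ (NNReal.sqrt 1 : ℝ) := by
              exact_mod_cast NNReal.sqrt_le_sqrt.mpr this
          _ = 1 := by simp
    _ = 1 := cfc_const_one ℝ a

lemma aux_le_sqrt {a : A} (h0 : 0 ≤ a) (h1 : a ≤ 1) : a ≤ CFC.sqrt a := by
  rw [CFC.sqrt_eq_cfc, cfc_nnreal_eq_real _ _ h0]
  conv_lhs => rw [← cfc_id' ℝ a]
  refine cfc_mono (hg := (NNReal.continuous_coe.comp (NNReal.continuous_sqrt.comp continuous_real_toNNReal)).continuousOn) ?_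
  intro x hx
  have hx0 : 0 ≤ x := spectrum_nonneg_of_nonneg h0 hx
  have hx1 : x ≤ 1 := by
    rw [CFC.le_one_iff (R := ℝ) a] at h1
    exact h1 x hx
  show x ≤ (NNReal.sqrt x.toNNReal : ℝ)
  have hrw : (NNReal.sqrt x.toNNReal : ℝ) = Real.sqrt x := by rw [Real.sqrt]
  rw [hrw]
  nth_rewrite 1 [← Real.sqrt_mul_self hx0]
  exact Real.sqrt_le_sqrt (by nlinarith)

lemma aux_sq_le {a : A} (h0 : 0 ≤ a) (h1 : a ≤ 1) : a * a ≤ a := by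
  have := CStarAlgebra.pow_antitone h0 h1 (one_le_two)
  simpa [pow_one, sq] using this

end CStarAux

section CommAux
variable {A : Type*} [CStarAlgebra A]

lemma aux_cfc_mem_elemental (g : ℂ → ℂ) (b : A) [hb : IsStarNormal b] :
    cfc g b ∈ StarAlgebra.elemental ℂ b := by
  by_cases hg : ContinuousOn g (spectrum ℂ b)
  · rw [cfc_apply g b, cfcHom_eq_of_isStarNormal]
    exact SetLike.coe_mem _
  · rw [cfc_apply_of_not_continuousOn b hg]
    exact zero_mem _

lemma aux_commute_of_mem_elemental {a b : A} (hb : IsSelfAdjoint b) (hab : a * b = b * a)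
    {x : A} (hx : x ∈ StarAlgebra.elemental ℂ b) : a * x = x * a := by
  set S : Set A := {y : A | a * y = y * a ∧ a * star y = star y * a} with hS
  have hclosed : IsClosed S := by
    apply IsClosed.inter
    · exact isClosed_eq (continuous_mul_left a) (continuous_mul_right a)
    · exact isClosed_eq ((continuous_mul_left a).comp continuous_star)
        ((continuous_mul_right a).comp continuous_star)
  have hsub : (StarAlgebra.adjoin ℂ ({b} : Set A) : Set A) ⊆ S := by
    intro y hy
    induction hy using StarAlgebra.adjoin_induction with
    | mem z hz =>
      rcases hz with rfl
      exact ⟨hab, by rwa [hb.star_eq]⟩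
    | algebraMap r =>
      refine ⟨(Algebra.commutes r a).symm, ?_⟩
      rw [← algebraMap_star_comm]
      exact (Algebra.commutes _ a).symm
    | add u hu v hv hu' hv' =>
      exact ⟨by rw [mul_add, hu'.1, hv'.1, add_mul], by
        rw [star_add, mul_add, hu'.2, hv'.2, add_mul]⟩
    | mul u hu v hv hu' hv' =>
      exact ⟨by rw [← mul_assoc, hu'.1, mul_assoc, hv'.1, mul_assoc], by
        rw [star_mul, ← mul_assoc, hv'.2, mul_assoc, hu'.2, mul_assoc]⟩
    | star u hu hu' => exact ⟨hu'.2, by simpa using hu'.1⟩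
  have hmem : x ∈ closure (StarAlgebra.adjoin ℂ ({b} : Set A) : Set A) := hx
  exact (closure_minimal hsub hclosed hmem).1

end CommAux

lemma aux_commute_sqrt {A : Type*} [CStarAlgebra A] [PartialOrder A] [StarOrderedRing A]
    {a b : A} (hb0 : 0 ≤ b) (hab : a * b = b * a) :
    a * CFC.sqrt b = CFC.sqrt b * a := by
  have hbsa : IsSelfAdjoint b := IsSelfAdjoint.of_nonneg hb0
  have : IsStarNormal b := hbsa.isStarNormal
  rw [CFC.sqrt_eq_cfc, cfc_nnreal_eq_real _ _ hb0, cfc_real_eq_complex _ hbsa]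
  exact aux_commute_of_mem_elemental hbsa hab (aux_cfc_mem_elemental _ b)

section NormSq

variable {H : Type*} [NormedAddCommGroup H] [InnerProductSpace ℂ H] [CompleteSpace H]

lemma aux_norm_sq_le (T : H →L[ℂ] H) (h0 : 0 ≤ T) (h1 : T ≤ 1) (x : H) :
    ‖T x‖ ^ 2 ≤ RCLike.re ⟪T x, x⟫_ℂ := by
  have hsq : T * T ≤ T := aux_sq_le h0 h1
  have hpos : (T - T * T).IsPositive := (ContinuousLinearMap.le_def _ _).mp hsq
  have h2 := hpos.2 x
  rw [ContinuousLinearMap.reApplyInnerSelf_apply] at h2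
  have hsymT : (T : H →ₗ[ℂ] H).IsSymmetric :=
    ((ContinuousLinearMap.nonneg_iff_isPositive T).mp h0).1
  have h3 : ⟪(T * T) x, x⟫_ℂ = ⟪T x, T x⟫_ℂ := by
    rw [ContinuousLinearMap.mul_apply]
    exact hsymT (T x) x
  have h4 : ‖T x‖ ^ 2 = RCLike.re ⟪(T * T) x, x⟫_ℂ := by
    rw [h3, inner_self_eq_norm_sq]
  rw [h4]
  rw [ContinuousLinearMap.sub_apply, inner_sub_left, map_sub] at h2
  linarith

end NormSq

/-- **Ceiling of an effect**: for an effect `b` in a von Neumann algebra `M` on a complex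
Hilbert space `H` there is a least projection `p ∈ M` above `b`, namely the least upper bound
(in the Loewner order, among self-adjoint operators) of the ascending sequence
`b^{1/2ⁿ}` of iterated square roots of `b`; moreover every bounded operator commuting with
`b` commutes with `p`. -/
theorem vonNeumannAlgebra_ceiling
    {H : Type*} [NormedAddCommGroup H] [InnerProductSpace ℂ H] [CompleteSpace H]
    (M : VonNeumannAlgebra H) (b : H →L[ℂ] H) (hbM : b ∈ M)
    (hb0 : 0 ≤ b) (hb1 : b ≤ 1) :
    ∃ p : H →L[ℂ] H, p ∈ M ∧ star p = p ∧ p * p = p ∧ b ≤ p ∧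
      (∀ q : H →L[ℂ] H, q ∈ M → star q = q → q * q = q → b ≤ q → p ≤ q) ∧
      (∀ n : ℕ, (CFC.sqrt (A := H →L[ℂ] H))^[n] b ≤ p) ∧
      (∀ t : H →L[ℂ] H, IsSelfAdjoint t →
        (∀ n : ℕ, (CFC.sqrt (A := H →L[ℂ] H))^[n] b ≤ t) → p ≤ t) ∧
      (∀ a : H →L[ℂ] H, a * b = b * a → a * p = p * a) := by
  let f : ℕ → H →L[ℂ] H := fun n => (CFC.sqrt (A := H →L[ℂ] H))^[n] b
  have hf0 : f 0 = b := rfl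
  have hfsucc : ∀ n, f (n + 1) = CFC.sqrt (f n) := fun n =>
    Function.iterate_succ_apply' _ _ _
  have heff : ∀ n, 0 ≤ f n ∧ f n ≤ 1 := by
    intro n; induction n with
    | zero => exact ⟨hb0, hb1⟩
    | succ k ih =>
      rw [hfsucc]
      exact ⟨CFC.sqrt_nonneg _, aux_sqrt_le_one ih.1 ih.2⟩
  have hmono : Monotone f := monotone_nat_of_le_succ fun n => by
    rw [hfsucc]; exact aux_le_sqrt (heff n).1 (heff n).2
  have hsq' : ∀ n, f (n + 1) * f (n + 1) = f n := fun n => by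
    rw [hfsucc]; exact CFC.sqrt_mul_sqrt_self _ (heff n).1
  have hsa : ∀ n, IsSelfAdjoint (f n) := fun n => .of_nonneg (heff n).1
  have hsym : ∀ n, ((f n : H →L[ℂ] H) : H →ₗ[ℂ] H).IsSymmetric := fun n =>
    isSelfAdjoint_iff_isSymmetric.mp (hsa n)
  have hcomm : ∀ a : H →L[ℂ] H, a * b = b * a → ∀ n, a * f n = f n * a := by
    intro a hab n; induction n with
    | zero => exact hab
    | succ k ih => rw [hfsucc]; exact aux_commute_sqrt (heff k).1 ih
  have hnorm : ∀ n (x : H), ‖f n x‖ ≤ ‖x‖ := by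
    intro n x
    calc ‖f n x‖ ≤ ‖f n‖ * ‖x‖ := le_opNorm _ _
      _ ≤ 1 * ‖x‖ := by
          gcongr
          exact (CStarAlgebra.norm_le_one_iff_of_nonneg _ (heff n).1).mpr (heff n).2
      _ = ‖x‖ := one_mul _
  -- the scalar sequences of diagonal matrix elements
  set s : H → ℕ → ℝ := fun x n => RCLike.re ⟪f n x, x⟫_ℂ with hsdef
  have hdiff : ∀ (x : H) {n m : ℕ}, n ≤ m →
      RCLike.re ⟪(f m - f n) x, x⟫_ℂ = s x m - s x n := by
    intro x n m _
    rw [ContinuousLinearMap.sub_apply, inner_sub_left, map_sub]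
  have hsmono : ∀ x, Monotone (s x) := by
    intro x n m hnm
    have h := ((ContinuousLinearMap.nonneg_iff_isPositive _).mp
      (sub_nonneg.mpr (hmono hnm))).2 x
    rw [ContinuousLinearMap.reApplyInnerSelf_apply, hdiff x hnm] at h
    linarith
  have hsbdd : ∀ x n, s x n ≤ ‖x‖ ^ 2 := by
    intro x n
    have h := ((ContinuousLinearMap.nonneg_iff_isPositive _).mp
      (sub_nonneg.mpr (heff n).2)).2 x
    rw [ContinuousLinearMap.reApplyInnerSelf_apply, ContinuousLinearMap.sub_apply,
      inner_sub_left, map_sub, ContinuousLinearMap.one_apply, inner_self_eq_norm_sq] at h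
    simp only [hsdef]
    linarith
  -- pointwise Cauchy
  have hcauchy : ∀ x, CauchySeq (fun n => f n x) := by
    intro x
    have hbdd : BddAbove (Set.range (s x)) :=
      ⟨‖x‖ ^ 2, by rintro _ ⟨n, rfl⟩; exact hsbdd x n⟩
    have hslim : Tendsto (s x) atTop (𝓝 (⨆ n, s x n)) :=
      tendsto_atTop_ciSup (hsmono x) hbdd
    have hscauchy : CauchySeq (s x) := hslim.cauchySeq
    rw [Metric.cauchySeq_iff] at hscauchy ⊢
    intro ε hε
    obtain ⟨N, hN⟩ := hscauchy (ε ^ 2) (by positivity)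
    refine ⟨N, fun m hm n hn => ?_⟩
    have key : ∀ k l, N ≤ k → N ≤ l → l ≤ k → dist (f k x) (f l x) < ε := by
      intro k l hk hl hlk
      have hT0 : 0 ≤ f k - f l := sub_nonneg.mpr (hmono hlk)
      have hT1 : f k - f l ≤ 1 := le_trans (sub_le_self _ (heff l).1) (heff k).2
      have h1 : ‖(f k - f l) x‖ ^ 2 ≤ RCLike.re ⟪(f k - f l) x, x⟫_ℂ :=
        aux_norm_sq_le _ hT0 hT1 x
      rw [hdiff x hlk] at h1
      have h2 : s x k - s x l < ε ^ 2 := by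
        have := hN k hk l hl
        rw [Real.dist_eq] at this
        exact lt_of_le_of_lt (le_abs_self _) this
      rw [dist_eq_norm, ← ContinuousLinearMap.sub_apply]
      nlinarith [norm_nonneg ((f k - f l) x), hε]
    rcases le_total n m with h | h
    · exact key m n hm hn h
    · rw [dist_comm]; exact key n m hn hm h
  -- construct the limit operator `p`
  have hlim : ∀ x : H, ∃ y : H, Tendsto (fun n => f n x) atTop (𝓝 y) := fun x =>
    cauchySeq_tendsto_of_complete (hcauchy x)
  choose plim hplim using hlim
  let P : H →ₗ[ℂ] H :=
    { toFun := plim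
      map_add' := fun x y => tendsto_nhds_unique (hplim (x + y))
        (((hplim x).add (hplim y)).congr (fun n => (map_add (f n) x y).symm))
      map_smul' := fun c x => tendsto_nhds_unique (hplim (c • x))
        (((hplim x).const_smul c).congr (fun n => (map_smul (f n) c x).symm)) }
  have hPbound : ∀ x, ‖P x‖ ≤ 1 * ‖x‖ := by
    intro x
    rw [one_mul]
    exact le_of_tendsto (hplim x).norm (Eventually.of_forall fun n => hnorm n x)
  let p : H →L[ℂ] H := P.mkContinuous 1 hPbound
  have htend : ∀ x, Tendsto (fun n => f n x) atTop (𝓝 (p x)) := hplim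
  -- self-adjointness of `p`
  have hpsym : (p : H →ₗ[ℂ] H).IsSymmetric := by
    intro x y
    have h1 : Tendsto (fun n => ⟪f n x, y⟫_ℂ) atTop (𝓝 ⟪p x, y⟫_ℂ) :=
      (htend x).inner tendsto_const_nhds
    have h2 : Tendsto (fun n => ⟪x, f n y⟫_ℂ) atTop (𝓝 ⟪x, p y⟫_ℂ) :=
      tendsto_const_nhds.inner (htend y)
    exact tendsto_nhds_unique (h1.congr fun n => hsym n x y) h2
  have hpsa : IsSelfAdjoint p := hpsym.isSelfAdjoint
  -- convergence of the scalar sequences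
  have hstend : ∀ x, Tendsto (s x) atTop (𝓝 (RCLike.re ⟪p x, x⟫_ℂ)) := fun x =>
    (RCLike.continuous_re.tendsto _).comp ((htend x).inner tendsto_const_nhds)
  -- `f n ≤ p`
  have hfle : ∀ n, f n ≤ p := by
    intro n
    rw [ContinuousLinearMap.le_def]
    refine ⟨isSelfAdjoint_iff_isSymmetric.mp (hpsa.sub (hsa n)), fun x => ?_⟩
    rw [ContinuousLinearMap.reApplyInnerSelf_apply, ContinuousLinearMap.sub_apply,
      inner_sub_left, map_sub]
    have h1 : Tendsto (fun m => s x m - s x n) atTop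
        (𝓝 (RCLike.re ⟪p x, x⟫_ℂ - s x n)) := (hstend x).sub_const _
    have h2 : 0 ≤ RCLike.re ⟪p x, x⟫_ℂ - s x n := by
      refine ge_of_tendsto h1 ?_
      filter_upwards [eventually_ge_atTop n] with m hm
      have := hsmono x hm
      linarith
    simpa [hsdef] using h2
  -- `p` is the least upper bound among self-adjoint operators
  have hlub : ∀ t : H →L[ℂ] H, IsSelfAdjoint t → (∀ n, f n ≤ t) → p ≤ t := by
    intro t ht hft
    rw [ContinuousLinearMap.le_def]
    refine ⟨isSelfAdjoint_iff_isSymmetric.mp (ht.sub hpsa), fun x => ?_⟩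
    rw [ContinuousLinearMap.reApplyInnerSelf_apply, ContinuousLinearMap.sub_apply,
      inner_sub_left, map_sub]
    have h1 : Tendsto (fun n => RCLike.re ⟪t x, x⟫_ℂ - s x n) atTop
        (𝓝 (RCLike.re ⟪t x, x⟫_ℂ - RCLike.re ⟪p x, x⟫_ℂ)) :=
      tendsto_const_nhds.sub (hstend x)
    refine ge_of_tendsto h1 ?_
    refine Eventually.of_forall fun n => ?_
    have h := ((ContinuousLinearMap.nonneg_iff_isPositive _).mp
      (sub_nonneg.mpr (hft n))).2 x
    rw [ContinuousLinearMap.reApplyInnerSelf_apply, ContinuousLinearMap.sub_apply,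
      inner_sub_left, map_sub] at h
    simpa [hsdef] using h
  -- idempotence
  have hidem : p * p = p := by
    ext x
    rw [ContinuousLinearMap.mul_apply]
    have h1 : Tendsto (fun n => f n (f n x)) atTop (𝓝 (p (p x))) := by
      rw [tendsto_iff_norm_sub_tendsto_zero]
      have hb' : ∀ n, ‖f n (f n x) - p (p x)‖ ≤
          ‖f n x - p x‖ + ‖f n (p x) - p (p x)‖ := by
        intro n
        calc ‖f n (f n x) - p (p x)‖
            ≤ ‖f n (f n x) - f n (p x)‖ + ‖f n (p x) - p (p x)‖ := by
              simpa [dist_eq_norm] using dist_triangle (f n (f n x)) (f n (p x)) (p (p x))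
          _ ≤ ‖f n x - p x‖ + ‖f n (p x) - p (p x)‖ := by
              gcongr
              calc ‖f n (f n x) - f n (p x)‖ = ‖f n (f n x - p x)‖ := by rw [map_sub]
                _ ≤ ‖f n x - p x‖ := hnorm n _
      refine squeeze_zero (fun n => norm_nonneg _) hb' ?_
      have ht1 : Tendsto (fun n => ‖f n x - p x‖) atTop (𝓝 0) :=
        tendsto_iff_norm_sub_tendsto_zero.mp (htend x)
      have ht2 : Tendsto (fun n => ‖f n (p x) - p (p x)‖) atTop (𝓝 0) :=
        tendsto_iff_norm_sub_tendsto_zero.mp (htend (p x))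
      simpa using ht1.add ht2
    have h2 : Tendsto (fun n => f (n + 1) (f (n + 1) x)) atTop (𝓝 (p x)) := by
      have h3 : Tendsto (fun n => f n x) atTop (𝓝 (p x)) := htend x
      refine h3.congr fun n => ?_
      rw [← ContinuousLinearMap.mul_apply, hsq' n]
    exact tendsto_nhds_unique (h1.comp (tendsto_add_atTop_nat 1)) h2
  -- commutation
  have hpcomm : ∀ a : H →L[ℂ] H, a * b = b * a → a * p = p * a := by
    intro a hab
    ext x
    rw [ContinuousLinearMap.mul_apply, ContinuousLinearMap.mul_apply]
    have h1 : Tendsto (fun n => a (f n x)) atTop (𝓝 (a (p x))) :=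
      (a.continuous.tendsto _).comp (htend x)
    have h2 : Tendsto (fun n => f n (a x)) atTop (𝓝 (p (a x))) := htend (a x)
    have heq : ∀ n, a (f n x) = f n (a x) := fun n => by
      rw [← ContinuousLinearMap.mul_apply, hcomm a hab n, ContinuousLinearMap.mul_apply]
    exact tendsto_nhds_unique (h1.congr heq) h2
  -- membership in the von Neumann algebra
  have hpM : p ∈ M := by
    have hmem : p ∈ Set.centralizer (Set.centralizer (M : Set (H →L[ℂ] H))) := by
      intro c hc
      exact hpcomm c (hc b hbM).symm
    rwa [M.centralizer_centralizer] at hmem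
  -- least projection above `b`
  have hqle : ∀ q : H →L[ℂ] H, q ∈ M → star q = q → q * q = q → b ≤ q → p ≤ q := by
    intro q _ hqstar hqidem hbq
    have hq1 : IsSelfAdjoint q := hqstar
    have hr : star (1 - q) = 1 - q := by rw [star_sub, star_one, hqstar]
    have hfq : ∀ n, f n ≤ q := by
      intro n; induction n with
      | zero => exact hbq
      | succ k ih =>
        have hc0 : 0 ≤ f (k + 1) := (heff (k + 1)).1
        have hcsa : IsSelfAdjoint (f (k + 1)) := hsa (k + 1)
        have key : (1 - q) * f k * (1 - q) = 0 := by
          have h1 : (1 - q) * f k * (1 - q) ≤ (1 - q) * q * (1 - q) := by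
            have := star_left_conjugate_le_conjugate ih (1 - q)
            rwa [hr] at this
          have h2 : (1 - q) * q * (1 - q) = 0 := by
            rw [sub_mul, one_mul, hqidem, sub_self, zero_mul]
          have h3 : 0 ≤ (1 - q) * f k * (1 - q) := by
            have := star_left_conjugate_nonneg (heff k).1 (1 - q)
            rwa [hr] at this
          exact le_antisymm (h1.trans_eq h2) h3
        have hcr : f (k + 1) * (1 - q) = 0 := by
          have hstarmul : star (f (k + 1) * (1 - q)) * (f (k + 1) * (1 - q)) =
              (1 - q) * f k * (1 - q) := by
            calc star (f (k + 1) * (1 - q)) * (f (k + 1) * (1 - q))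
                = (1 - q) * f (k + 1) * (f (k + 1) * (1 - q)) := by
                  rw [star_mul, hr, hcsa.star_eq]
              _ = (1 - q) * (f (k + 1) * f (k + 1)) * (1 - q) := by noncomm_ring
              _ = (1 - q) * f k * (1 - q) := by rw [hsq' k]
          have := hstarmul.trans key
          exact CStarRing.star_mul_self_eq_zero_iff _ |>.mp this
        have hcq : f (k + 1) * q = f (k + 1) := by
          have h := hcr
          rw [mul_sub, mul_one, sub_eq_zero] at h
          exact h.symm
        have hqc : q * f (k + 1) = f (k + 1) := by
          have h := congrArg star hcr
          rw [star_mul, hr, hcsa.star_eq, star_zero] at h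
          rw [sub_mul, one_mul, sub_eq_zero] at h
          exact h.symm
        have hconj : f (k + 1) = q * f (k + 1) * q := by
          rw [mul_assoc, hcq, hqc]
        have h4 : q * f (k + 1) * q ≤ q * 1 * q :=
          IsSelfAdjoint.conjugate_le_conjugate (heff (k + 1)).2 hq1
        have h5 : q * (1 : H →L[ℂ] H) * q = q := by rw [mul_one, hqidem]
        calc f (k + 1) = q * f (k + 1) * q := hconj
          _ ≤ q * 1 * q := h4
          _ = q := h5
    exact hlub q hq1 hfq
  exact ⟨p, hpM, hpsa.star_eq, hidem, hf0 ▸ hfle 0, hqle, hfle, hlub, hpcomm⟩
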